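/- Let r : 𝔤* → 𝔤 be a skew-symmetric linear map. Then the graph of r, graph(r) := {(α, r(α)) : α ∈ 𝔤*}, is a totally isotropic subspace of 𝔤* × 𝔤 with respect to the canonical pairing, and graph(r) is a Lie subalgebra of the semidirect product Lie algebra t*𝔤 = 𝔤* ⋊ 𝔤 if and only if [r,r] = 0, i.e. r is a solution of the classical Yang–Baxter equation. -/
import Mathlib


/-- The coadjoint action of `x : L` on the dual: `⟨coad x α, y⟩ = -⟨α, [x,y]⟩`. -/
noncomputable def coad {L : Type*} [LieRing L] [LieAlgebra ℝ L]
    (x : L) (α : Module.Dual ℝ L) : Module.Dual ℝ L :=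
  -(α ∘ₗ (LieAlgebra.ad ℝ L x))

/-- `[r,r](α,β,γ) := ⟨γ,[r α, r β]⟩ + ⟨α,[r β, r γ]⟩ + ⟨β,[r γ, r α]⟩`. -/
def cybe {L : Type*} [LieRing L] [LieAlgebra ℝ L]
    (r : Module.Dual ℝ L →ₗ[ℝ] L) (α β γ : Module.Dual ℝ L) : ℝ :=
  γ ⁅r α, r β⁆ + α ⁅r β, r γ⁆ + β ⁅r γ, r α⁆

/-- The canonical pairing on `𝔤* × 𝔤`: `⟨(α,x),(β,y)⟩ = α y + β x`. -/
def tpair {L : Type*} [LieRing L] [LieAlgebra ℝ L]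
    (p q : Module.Dual ℝ L × L) : ℝ := p.1 q.2 + q.1 p.2

/-- The bracket of the semidirect product Lie algebra `t*𝔤 = 𝔤* ⋊ 𝔤`:
`[(α,x),(β,y)] = (ad*_x β - ad*_y α, [x,y])`. -/
noncomputable def sdbr {L : Type*} [LieRing L] [LieAlgebra ℝ L]
    (p q : Module.Dual ℝ L × L) : Module.Dual ℝ L × L :=
  (coad p.2 q.1 - coad q.2 p.1, ⁅p.2, q.2⁆)

/-- The graph of `r : 𝔤* → 𝔤` inside `𝔤* × 𝔤`. -/
def rgraph {L : Type*} [LieRing L] [LieAlgebra ℝ L]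
    (r : Module.Dual ℝ L →ₗ[ℝ] L) : Set (Module.Dual ℝ L × L) :=
  {p | p.2 = r p.1}

lemma coad_apply {L : Type*} [LieRing L] [LieAlgebra ℝ L]
    (x : L) (α : Module.Dual ℝ L) (y : L) : coad x α y = -α ⁅x, y⁆ := by
  simp [coad, LieAlgebra.ad_apply]

lemma key {L : Type*} [LieRing L] [LieAlgebra ℝ L]
    (r : Module.Dual ℝ L →ₗ[ℝ] L)
    (hskew : ∀ α β : Module.Dual ℝ L, α (r β) = - β (r α))
    (α β γ : Module.Dual ℝ L) :
    γ (⁅r α, r β⁆ - r (coad (r α) β - coad (r β) α)) = cybe r α β γ := by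
  have h1 : γ (r (coad (r α) β - coad (r β) α))
      = -((coad (r α) β - coad (r β) α) (r γ)) := by
    rw [hskew γ]
  rw [map_sub, h1]
  simp only [LinearMap.sub_apply, coad_apply, cybe]
  have h2 : β ⁅r γ, r α⁆ = - β ⁅r α, r γ⁆ := by rw [← lie_skew, map_neg]
  linarith [h2]

/-- for skew-symmetric `r`, the graph of `r` is totally isotropic for the
canonical pairing, and it is a Lie subalgebra of `t*𝔤 = 𝔤* ⋊ 𝔤` iff `[r,r] = 0`. -/
theorem stmt1 {L : Type*} [LieRing L] [LieAlgebra ℝ L] [FiniteDimensional ℝ L]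
    (r : Module.Dual ℝ L →ₗ[ℝ] L)
    (hskew : ∀ α β : Module.Dual ℝ L, α (r β) = - β (r α)) :
    (∀ p ∈ rgraph r, ∀ q ∈ rgraph r, tpair p q = 0) ∧
    ((∀ p ∈ rgraph r, ∀ q ∈ rgraph r, sdbr p q ∈ rgraph r) ↔
      (∀ α β γ : Module.Dual ℝ L, cybe r α β γ = 0)) := by
  refine ⟨?_, ?_, ?_⟩
  · intro p hp q hq
    simp only [rgraph, Set.mem_setOf_eq] at hp hq
    simp [tpair, hp, hq, hskew p.1 q.1]
  · intro h α β γ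
    have hm := h (α, r α) rfl (β, r β) rfl
    simp only [rgraph, sdbr, Set.mem_setOf_eq] at hm
    have := key r hskew α β γ
    rw [hm, sub_self, map_zero] at this
    exact this.symm
  · intro h p hp q hq
    simp only [rgraph, Set.mem_setOf_eq] at hp hq ⊢
    simp only [sdbr, hp, hq]
    have : ∀ γ : Module.Dual ℝ L,
        γ (⁅r p.1, r q.1⁆ - r (coad (r p.1) q.1 - coad (r q.1) p.1)) = 0 := by
      intro γ; rw [key r hskew p.1 q.1 γ]; exact h p.1 q.1 γ
    have hz := (Module.forall_dual_apply_eq_zero_iff ℝ _).mp this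
    rw [sub_eq_zero] at hz
    exact hz
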